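/- Let B be a skew brace of nilpotent type. If B is both left nilpotent and right nilpotent, then the multiplicative group (B,∘) is a nilpotent group. -/

import Mathlib

/-- A skew brace: a type with two group structures `(B,+)` and `(B,∘)`
(the multiplicative group is written with `*`) sharing the same underlying set,
such that `a ∘ (b + c) = a ∘ b - a + a ∘ c`. -/
class SkewBrace (B : Type*) extends AddGroup B, Group B where
  circ_add : ∀ a b c : B, a * (b + c) = a * b - a + a * c

namespace SkewBrace

variable {B : Type*} [SkewBrace B]

/-- `lam a b = -a + a ∘ b`, i.e. `λ_a(b)`. -/
def lam (a b : B) : B := -a + a * b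

/-- `a * b` (the star operation) `= λ_a(b) - b = -a + a ∘ b - b`. -/
def starOp (a b : B) : B := -a + a * b - b

/-- `X * Y` : the additive subgroup generated by all `x * y`, `x ∈ X`, `y ∈ Y`,
regarded as a set. -/
def starSpan (X Y : Set B) : Set B :=
  (AddSubgroup.closure {z : B | ∃ x ∈ X, ∃ y ∈ Y, z = starOp x y} : AddSubgroup B)

/-- `[X,Y]₊` : the additive subgroup generated by all additive commutators
`x + y - x - y`, `x ∈ X`, `y ∈ Y`, regarded as a set. -/
def addCommSpan (X Y : Set B) : Set B :=
  (AddSubgroup.closure {z : B | ∃ x ∈ X, ∃ y ∈ Y, z = x + y - x - y} : AddSubgroup B)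

/-- A sub skew brace: a subset containing `0` and closed under both group
operations and both inverses. -/
def IsSubSkewBrace (S : Set B) : Prop :=
  0 ∈ S ∧ (∀ a ∈ S, ∀ b ∈ S, a + b ∈ S) ∧ (∀ a ∈ S, -a ∈ S) ∧
    (∀ a ∈ S, ∀ b ∈ S, a * b ∈ S) ∧ (∀ a ∈ S, a⁻¹ ∈ S)

/-- An ideal: a sub skew brace that is normal in `(B,+)` and in `(B,∘)` and
invariant under all `λ_a`. -/
def IsIdeal (S : Set B) : Prop :=
  IsSubSkewBrace S ∧ (∀ a : B, ∀ i ∈ S, a + i - a ∈ S) ∧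
    (∀ a : B, ∀ i ∈ S, a * i * a⁻¹ ∈ S) ∧ (∀ a : B, ∀ i ∈ S, lam a i ∈ S)

/-- The annihilator `Ann(B) = {x | x∘a = a∘x = x+a = a+x for all a}`. -/
def annSet (B : Type*) [SkewBrace B] : Set B :=
  {x | ∀ a : B, x * a = a * x ∧ x * a = x + a ∧ x + a = a + x}

/-- The annihilator series: `Ann₀(B) = 0` and `Ann_{n+1}(B)` is the preimage of
`Ann(B/Annₙ(B))` under the quotient map; membership is expressed via coset
equalities modulo `Annₙ(B)`. -/
def annSeries (B : Type*) [SkewBrace B] : ℕ → Set B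
  | 0 => {0}
  | n + 1 => {x | ∀ a : B,
      x * a - a * x ∈ annSeries B n ∧
      x * a - (x + a) ∈ annSeries B n ∧
      (x + a) - (a + x) ∈ annSeries B n}

/-- `B` is annihilator nilpotent if `Annₙ(B) = B` for some `n`. -/
def AnnNilpotent (B : Type*) [SkewBrace B] : Prop :=
  ∃ n : ℕ, annSeries B n = Set.univ

/-- `leftPow B n` is `B^{n+1}`: `B¹ = B`, `B^{n+1} = B * Bⁿ`. -/
def leftPow (B : Type*) [SkewBrace B] : ℕ → Set B
  | 0 => Set.univ
  | n + 1 => starSpan Set.univ (leftPow B n)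

/-- `rightPow B n` is `B⁽ⁿ⁺¹⁾`: `B⁽¹⁾ = B`, `B⁽ⁿ⁺¹⁾ = B⁽ⁿ⁾ * B`. -/
def rightPow (B : Type*) [SkewBrace B] : ℕ → Set B
  | 0 => Set.univ
  | n + 1 => starSpan (rightPow B n) Set.univ

/-- `B` is left nilpotent if `Bⁿ = 0` for some `n ≥ 1`. -/
def LeftNilpotent (B : Type*) [SkewBrace B] : Prop :=
  ∃ n : ℕ, leftPow B n = ({0} : Set B)

/-- `B` is right nilpotent if `B⁽ⁿ⁾ = 0` for some `n ≥ 1`. -/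
def RightNilpotent (B : Type*) [SkewBrace B] : Prop :=
  ∃ n : ℕ, rightPow B n = ({0} : Set B)

/-- `strongPow B n` is `B^[n+1]`: `B^[1] = B`, and `B^[n+1]` is the additive
subgroup generated by `⋃_{i=1}^{n} B^[i] * B^[n+1-i]`. -/
def strongPow (B : Type*) [SkewBrace B] : ℕ → Set B
  | 0 => Set.univ
  | n + 1 => (AddSubgroup.closure (⋃ j : Fin (n + 1),
      {z : B | ∃ x ∈ strongPow B j.1, ∃ y ∈ strongPow B (n - j.1), z = starOp x y}) :
        AddSubgroup B)
  decreasing_by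
  · exact j.isLt
  · omega

/-- `B` is strongly nilpotent if `B^[n] = 0` for some `n ≥ 1`. -/
def StronglyNilpotent (B : Type*) [SkewBrace B] : Prop :=
  ∃ n : ℕ, strongPow B n = ({0} : Set B)

/-- `gammaAux B n` is `Γ_[n+1](B)`: `Γ_[1](B) = B` and, for `n ≥ 2`, `Γ_[n](B)` is
the additive subgroup generated by the sets `Γ_[i](B) * Γ_[n-i](B)` and
`[Γ_[i](B), Γ_[n-i](B)]₊` for `1 ≤ i ≤ n-1`. -/
def gammaAux (B : Type*) [SkewBrace B] : ℕ → Set B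
  | 0 => Set.univ
  | n + 1 => (AddSubgroup.closure (⋃ j : Fin (n + 1),
      {z : B | ∃ x ∈ gammaAux B j.1, ∃ y ∈ gammaAux B (n - j.1),
        z = starOp x y ∨ z = x + y - x - y}) : AddSubgroup B)
  decreasing_by
  · exact j.isLt
  · omega

/-- `Γ_[n](B)` for `n ≥ 1` (one-based indexing as in the paper). -/
def gammaBr (B : Type*) [SkewBrace B] (n : ℕ) : Set B := gammaAux B (n - 1)

/-- `B` is finitely generated as a skew brace: there is a finite subset whose
smallest containing sub skew brace is `B` itself. -/
def SBFinitelyGenerated (B : Type*) [SkewBrace B] : Prop :=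
  ∃ S : Set B, S.Finite ∧ ∀ T : Set B, IsSubSkewBrace T → S ⊆ T → T = Set.univ

/-- `B` satisfies the ascending chain condition on sub skew braces. -/
def ACCSubSkewBrace (B : Type*) [SkewBrace B] : Prop :=
  ∀ f : ℕ → Set B, (∀ n, IsSubSkewBrace (f n)) → (∀ n, f n ⊆ f (n + 1)) →
    ∃ N : ℕ, ∀ n, N ≤ n → f n = f N


/- ===================== auxiliary development for stmt1 ===================== -/

/-! ### Basic identities in a skew brace -/

theorem sb_mul_zero (a : B) : a * (0 : B) = a := by
  have h := SkewBrace.circ_add a 0 0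
  rw [add_zero] at h
  have h4 : a * (0:B) - a + a * 0 = 0 + a * 0 := by rw [← h, zero_add]
  exact sub_eq_zero.mp (add_right_cancel h4)

theorem sb_one_eq_zero : (1 : B) = 0 := by
  have h := sb_mul_zero (1 : B)
  rw [one_mul] at h
  exact h.symm

theorem lam_add' (a b c : B) : lam a (b + c) = lam a b + lam a c := by
  simp only [lam, SkewBrace.circ_add a b c, sub_eq_add_neg, add_assoc]

theorem lam_zero' (a : B) : lam a 0 = 0 := by
  simp [lam, sb_mul_zero]

/-- `lam a` as an additive monoid hom. -/
def lamHom (a : B) : B →+ B where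
  toFun := lam a
  map_zero' := lam_zero' a
  map_add' := lam_add' a

theorem lam_neg' (a b : B) : lam a (-b) = -(lam a b) := (lamHom a).map_neg b

theorem sb_mul_eq (a b : B) : a * b = a + lam a b := by
  simp [lam]

theorem lam_mul' (a b c : B) : lam (a * b) c = lam a (lam b c) := by
  have h1 : lam a (lam b c) = lam a (-b) + lam a (b * c) := by
    rw [show lam b c = -b + b * c from rfl, lam_add']
  rw [h1, lam_neg']
  simp only [lam, mul_assoc, neg_add_rev, neg_neg, add_assoc, neg_add_cancel_left,
    add_neg_cancel_left]

theorem lam_inv_self (a : B) : lam a a⁻¹ = -a := by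
  have h : a + lam a a⁻¹ = (0 : B) := by rw [← sb_mul_eq, mul_inv_cancel, sb_one_eq_zero]
  exact eq_neg_of_add_eq_zero_right h

theorem star_lam (a b : B) : starOp a b = lam a b - b := rfl

theorem lam_eq_star_add (a b : B) : lam a b = starOp a b + b := by
  rw [star_lam, sub_add_cancel]

theorem star_zero' (a : B) : starOp a 0 = 0 := by
  rw [star_lam, lam_zero', sub_zero]

theorem star_add' (a x y : B) :
    starOp a (x + y) = starOp a x + (x + starOp a y - x) := by
  simp only [star_lam, lam_add', sub_eq_add_neg, neg_add_rev, add_assoc,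
    neg_add_cancel_left, add_neg_cancel_left]

theorem star_neg' (a x : B) : starOp a (-x) = -x + -(starOp a x) - -x := by
  simp only [star_lam, lam_neg', sub_eq_add_neg, neg_add_rev, neg_neg, add_assoc,
    neg_add_cancel_left, add_neg_cancel_left]

theorem conj_star (a c y : B) :
    c + starOp a y - c = -(starOp a c) + starOp a (c + y) := by
  simp only [star_lam, lam_add', sub_eq_add_neg, neg_add_rev, neg_neg, add_assoc,
    neg_add_cancel_left, add_neg_cancel_left]

theorem comm_add' (b x y : B) :
    b + (x + y) - b - (x + y) = (b + x - b - x) + (x + (b + y - b - y) - x) := by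
  simp only [sub_eq_add_neg, neg_add_rev, add_assoc, neg_add_cancel_left,
    add_neg_cancel_left]

theorem comm_neg' (b x : B) :
    b + (-x) - b - (-x) = -x + -(b + x - b - x) - -x := by
  simp only [sub_eq_add_neg, neg_add_rev, neg_neg, add_assoc, neg_add_cancel_left,
    add_neg_cancel_left]

theorem neg_comm_eq (a b : B) : -(a + b - a - b) = b + a - b - a := by
  simp only [sub_eq_add_neg, neg_add_rev, neg_neg, add_assoc]

theorem lam_sub' (a x y : B) : lam a (x - y) = lam a x - lam a y :=
  (lamHom a).map_sub x y

theorem lam_star' (a x y : B) :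
    lam a (starOp x y) = starOp (a * x * a⁻¹) (lam a y) := by
  rw [star_lam, lam_sub', star_lam]
  show lam a (lam x y) - lam a y = lam (a * x * a⁻¹) (lam a y) - lam a y
  rw [← lam_mul', ← lam_mul', inv_mul_cancel_right]

theorem conj_circ (a u : B) :
    a * u * a⁻¹ = a + (lam a u + lam a (starOp u a⁻¹)) - a := by
  rw [sb_mul_eq (a * u) a⁻¹, lam_mul' a u a⁻¹, sb_mul_eq a u,
    show lam u a⁻¹ = starOp u a⁻¹ + a⁻¹ from lam_eq_star_add u a⁻¹, lam_add', lam_inv_self]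
  simp only [add_assoc, sub_eq_add_neg]

theorem inv_decomp (x : B) : x⁻¹ = -(starOp x x⁻¹) - x := by
  have h : x + (starOp x x⁻¹ + x⁻¹) = (0 : B) := by
    rw [← lam_eq_star_add, ← sb_mul_eq, mul_inv_cancel, sb_one_eq_zero]
  have h2 : starOp x x⁻¹ + x⁻¹ = -x := by
    calc starOp x x⁻¹ + x⁻¹ = -x + (x + (starOp x x⁻¹ + x⁻¹)) := (neg_add_cancel_left _ _).symm
    _ = -x := by rw [h, add_zero]
  calc x⁻¹ = -(starOp x x⁻¹) + (starOp x x⁻¹ + x⁻¹) := (neg_add_cancel_left _ _).symm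
  _ = -(starOp x x⁻¹) - x := by rw [h2, sub_eq_add_neg]

/-- conjugation as an additive monoid hom. -/
def conjHom (c : B) : B →+ B where
  toFun := fun x => c + x - c
  map_zero' := by simp
  map_add' := by
    intro x y
    simp only [sub_eq_add_neg, add_assoc, neg_add_cancel_left]

/-! ### Closure helpers -/

theorem closure_map_mem {S : Set B} {N : AddSubgroup B} (f : B →+ B)
    (h : ∀ s ∈ S, f s ∈ N) {x : B} (hx : x ∈ AddSubgroup.closure S) : f x ∈ N := by
  have h2 : AddSubgroup.closure S ≤ N.comap f := (AddSubgroup.closure_le _).mpr h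
  exact h2 hx

theorem star_comm_closure {S : Set B} {N : AddSubgroup B}
    (hnorm : ∀ c : B, ∀ x ∈ N, c + x - c ∈ N)
    (hgen : ∀ s ∈ S, ∀ b : B, starOp b s ∈ N ∧ b + s - b - s ∈ N)
    {x : B} (hx : x ∈ AddSubgroup.closure S) :
    ∀ b : B, starOp b x ∈ N ∧ b + x - b - x ∈ N := by
  induction hx using AddSubgroup.closure_induction with
  | mem s hs => exact hgen s hs
  | zero =>
    intro b
    constructor
    · rw [star_zero']; exact N.zero_mem
    · simp only [add_zero, sub_zero, sub_self]; exact N.zero_mem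
  | add x y hxc hyc ihx ihy =>
    intro b
    constructor
    · rw [star_add']
      exact N.add_mem (ihx b).1 (hnorm x _ (ihy b).1)
    · rw [comm_add']
      exact N.add_mem (ihx b).2 (hnorm x _ (ihy b).2)
  | neg x hxc ihx =>
    intro b
    constructor
    · rw [star_neg']
      exact hnorm (-x) _ (N.neg_mem (ihx b).1)
    · rw [comm_neg']
      exact hnorm (-x) _ (N.neg_mem (ihx b).2)

/-! ### gammaAux lemmas -/

def gamSub (B : Type*) [SkewBrace B] : ℕ → AddSubgroup B
  | 0 => ⊤
  | n + 1 => AddSubgroup.closure (⋃ j : Fin (n + 1),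
      {z : B | ∃ x ∈ gammaAux B j.1, ∃ y ∈ gammaAux B (n - j.1),
        z = starOp x y ∨ z = x + y - x - y})

theorem coe_gamSub (B : Type*) [SkewBrace B] : ∀ n, (gamSub B n : Set B) = gammaAux B n
  | 0 => by rw [gammaAux]; rfl
  | n + 1 => by rw [gammaAux]; rfl

theorem mem_gamSub {n : ℕ} {x : B} : x ∈ gamSub B n ↔ x ∈ gammaAux B n := by
  rw [← coe_gamSub]; exact Iff.rfl

theorem gamma_zero_all (x : B) : x ∈ gammaAux B 0 := by
  rw [← coe_gamSub]; trivial

theorem gamma_zero_mem (n : ℕ) : (0 : B) ∈ gammaAux B n :=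
  mem_gamSub.mp (gamSub B n).zero_mem

theorem gamma_add_mem {n : ℕ} {x y : B} (hx : x ∈ gammaAux B n) (hy : y ∈ gammaAux B n) :
    x + y ∈ gammaAux B n :=
  mem_gamSub.mp ((gamSub B n).add_mem (mem_gamSub.mpr hx) (mem_gamSub.mpr hy))

theorem gamma_neg_mem {n : ℕ} {x : B} (hx : x ∈ gammaAux B n) : -x ∈ gammaAux B n :=
  mem_gamSub.mp ((gamSub B n).neg_mem (mem_gamSub.mpr hx))

theorem star_mem_gamma {i j : ℕ} {x y : B} (hx : x ∈ gammaAux B i) (hy : y ∈ gammaAux B j) :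
    starOp x y ∈ gammaAux B (i + j + 1) := by
  rw [← coe_gamSub]
  exact AddSubgroup.subset_closure (Set.mem_iUnion.mpr
    ⟨⟨i, by omega⟩, ⟨x, hx, y, by simpa using hy, Or.inl rfl⟩⟩)

theorem comm_mem_gamma {i j : ℕ} {x y : B} (hx : x ∈ gammaAux B i) (hy : y ∈ gammaAux B j) :
    x + y - x - y ∈ gammaAux B (i + j + 1) := by
  rw [← coe_gamSub]
  exact AddSubgroup.subset_closure (Set.mem_iUnion.mpr
    ⟨⟨i, by omega⟩, ⟨x, hx, y, by simpa using hy, Or.inr rfl⟩⟩)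

theorem gamma_succ_le {n : ℕ} {A : AddSubgroup B}
    (h : ∀ j, j ≤ n → ∀ x ∈ gammaAux B j, ∀ y ∈ gammaAux B (n - j),
       starOp x y ∈ A ∧ x + y - x - y ∈ A) :
    gammaAux B (n + 1) ⊆ (A : Set B) := by
  rw [← coe_gamSub]
  have hle : gamSub B (n + 1) ≤ A := by
    apply AddSubgroup.closure_le _ |>.mpr
    rintro z hz
    rw [Set.mem_iUnion] at hz
    obtain ⟨⟨j, hj⟩, x, hx, y, hy, hzeq | hzeq⟩ := hz
    · exact hzeq ▸ (h j (by omega) x hx y hy).1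
    · exact hzeq ▸ (h j (by omega) x hx y hy).2
  exact fun z hz => hle hz

theorem gamma_succ_subset : ∀ n, gammaAux B (n + 1) ⊆ gammaAux B n := by
  intro n
  induction n using Nat.strong_induction_on with
  | _ n ih =>
    match n with
    | 0 => exact fun x _ => gamma_zero_all x
    | Nat.succ m =>
      have h : gammaAux B (m + 1 + 1) ⊆ (gamSub B (m + 1) : Set B) := by
        apply gamma_succ_le
        intro j hj x hx y hy
        rcases Nat.lt_or_ge j (m + 1) with hlt | hge
        · have he : m + 1 - j = (m - j) + 1 := by omega
          rw [he] at hy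
          have hy' : y ∈ gammaAux B (m - j) := ih (m - j) (by omega) hy
          have h1 := star_mem_gamma hx hy'
          have h2 := comm_mem_gamma hx hy'
          have he2 : j + (m - j) + 1 = m + 1 := by omega
          rw [he2] at h1 h2
          exact ⟨mem_gamSub.mpr h1, mem_gamSub.mpr h2⟩
        · have hje : j = m + 1 := by omega
          subst hje
          have hx' : x ∈ gammaAux B m := ih m (by omega) hx
          have hy' : y ∈ gammaAux B 0 := gamma_zero_all y
          have h1 := star_mem_gamma hx' hy'
          have h2 := comm_mem_gamma hx' hy'
          have he2 : m + 0 + 1 = m + 1 := by omega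
          rw [he2] at h1 h2
          exact ⟨mem_gamSub.mpr h1, mem_gamSub.mpr h2⟩
      rw [coe_gamSub] at h
      exact h

theorem gamma_mono {a b : ℕ} (h : a ≤ b) : gammaAux B b ⊆ gammaAux B a := by
  induction b, h using Nat.le_induction with
  | base => exact fun _ h => h
  | succ b _ ih => exact fun x hx => ih (gamma_succ_subset b hx)

theorem conj_mem_gamma {n : ℕ} {t : B} (ht : t ∈ gammaAux B n) (c : B) :
    c + t - c ∈ gammaAux B n := by
  have h1 : c + t - c - t ∈ gammaAux B (0 + n + 1) :=
    comm_mem_gamma (gamma_zero_all c) ht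
  have h2 : c + t - c - t ∈ gammaAux B n :=
    gamma_mono (by omega) h1
  have := gamma_add_mem h2 ht
  rwa [sub_add_cancel] at this

theorem inv_mem_gamma {n : ℕ} {x : B} (hx : x ∈ gammaAux B n) : x⁻¹ ∈ gammaAux B n := by
  rw [inv_decomp, sub_eq_add_neg]
  have h1 : starOp x x⁻¹ ∈ gammaAux B (n + 0 + 1) := star_mem_gamma hx (gamma_zero_all x⁻¹)
  exact gamma_add_mem (gamma_neg_mem (gamma_mono (by omega) h1)) (gamma_neg_mem hx)

theorem mul_mem_gamma {n : ℕ} {x y : B} (hx : x ∈ gammaAux B n) (hy : y ∈ gammaAux B n) :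
    x * y ∈ gammaAux B n := by
  rw [sb_mul_eq, lam_eq_star_add]
  have h1 : starOp x y ∈ gammaAux B (n + n + 1) := star_mem_gamma hx hy
  exact gamma_add_mem hx (gamma_add_mem (gamma_mono (by omega) h1) hy)

/-! ### rightPow lemmas -/

def rpSub (B : Type*) [SkewBrace B] : ℕ → AddSubgroup B
  | 0 => ⊤
  | k + 1 => AddSubgroup.closure {z : B | ∃ x ∈ rightPow B k, ∃ y ∈ Set.univ, z = starOp x y}

theorem coe_rpSub (B : Type*) [SkewBrace B] : ∀ k, (rpSub B k : Set B) = rightPow B k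
  | 0 => rfl
  | k + 1 => rfl

theorem mem_rpSub {k : ℕ} {x : B} : x ∈ rpSub B k ↔ x ∈ rightPow B k := by
  rw [← coe_rpSub]; exact Iff.rfl

theorem rp_star_mem {k : ℕ} {x : B} (hx : x ∈ rightPow B k) (y : B) :
    starOp x y ∈ rightPow B (k + 1) :=
  AddSubgroup.subset_closure ⟨x, hx, y, trivial, rfl⟩

theorem rp_desc : ∀ k, rightPow B (k + 1) ⊆ rightPow B k := by
  intro k
  induction k with
  | zero => exact fun x _ => trivial
  | succ k ih =>
    intro z hz
    rw [← mem_rpSub] at hz ⊢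
    refine (AddSubgroup.closure_le _ |>.mpr ?_ : rpSub B (k+2) ≤ rpSub B (k+1)) hz
    rintro w ⟨x, hx, y, -, rfl⟩
    exact mem_rpSub.mpr (rp_star_mem (ih hx) y)

theorem rp_norm : ∀ k, ∀ c : B, ∀ x ∈ rightPow B k, c + x - c ∈ rightPow B k := by
  intro k c x hx
  match k with
  | 0 => trivial
  | k + 1 =>
    rw [← mem_rpSub]
    refine closure_map_mem (conjHom c) ?_ (mem_rpSub.mpr hx : x ∈ rpSub B (k+1))
    rintro s ⟨x', hx', y, -, rfl⟩
    show c + starOp x' y - c ∈ rpSub B (k + 1)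
    rw [conj_star]
    exact (rpSub B (k+1)).add_mem
      ((rpSub B (k+1)).neg_mem (mem_rpSub.mpr (rp_star_mem hx' c)))
      (mem_rpSub.mpr (rp_star_mem hx' (c + y)))

theorem rp_lam_conj : ∀ k, (∀ (a x : B), x ∈ rightPow B k → lam a x ∈ rightPow B k) ∧
    (∀ (a x : B), x ∈ rightPow B k → a * x * a⁻¹ ∈ rightPow B k) := by
  intro k
  induction k with
  | zero => exact ⟨fun _ _ _ => trivial, fun _ _ _ => trivial⟩
  | succ k ih =>
    have hlam : ∀ (a x : B), x ∈ rightPow B (k+1) → lam a x ∈ rightPow B (k+1) := by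
      intro a x hx
      rw [← mem_rpSub]
      refine closure_map_mem (lamHom a) ?_ (mem_rpSub.mpr hx : x ∈ rpSub B (k+1))
      rintro s ⟨x', hx', y, -, rfl⟩
      show lam a (starOp x' y) ∈ rpSub B (k + 1)
      rw [lam_star']
      exact mem_rpSub.mpr (rp_star_mem (ih.2 a x' hx') (lam a y))
    refine ⟨hlam, ?_⟩
    intro a x hx
    rw [conj_circ]
    apply rp_norm (k+1)
    have h1 : lam a x ∈ rightPow B (k+1) := hlam a x hx
    have h2 : starOp x a⁻¹ ∈ rightPow B (k+1) := rp_desc (k+1) (rp_star_mem hx a⁻¹)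
    have h3 : lam a (starOp x a⁻¹) ∈ rightPow B (k+1) := hlam a _ h2
    exact mem_rpSub.mp ((rpSub B (k+1)).add_mem (mem_rpSub.mpr h1) (mem_rpSub.mpr h3))

/-! ### leftPow lemma -/

theorem lp_star_mem {p : ℕ} {x : B} (hx : x ∈ leftPow B p) (b : B) :
    starOp b x ∈ leftPow B (p + 1) :=
  AddSubgroup.subset_closure ⟨b, trivial, x, hx, rfl⟩

/-! ### additive lower central series -/

def gma (B : Type*) [SkewBrace B] (n : ℕ) : AddSubgroup B :=
  AddSubgroup.toSubgroup.symm (Subgroup.lowerCentralSeries (⊤ : Subgroup (Multiplicative B)) n)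

theorem mem_gma {n : ℕ} {x : B} :
    x ∈ gma B n ↔ Multiplicative.ofAdd x ∈ Subgroup.lowerCentralSeries (⊤ : Subgroup (Multiplicative B)) n :=
  Iff.rfl

theorem gma_zero_all (x : B) : x ∈ gma B 0 := by
  rw [mem_gma]; exact Subgroup.mem_top _

theorem gma_antitone {m n : ℕ} (h : m ≤ n) : gma B n ≤ gma B m := by
  intro x hx
  exact mem_gma.mpr (lowerCentralSeries_antitone (S := ⊤) h (mem_gma.mp hx))

open scoped commutatorElement in
theorem ofAdd_comm_eq (b x : B) :
    (⁅Multiplicative.ofAdd b, Multiplicative.ofAdd x⁆ : Multiplicative B)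
      = Multiplicative.ofAdd (b + x - b - x) := by
  simp [commutatorElement_def, sub_eq_add_neg, ofAdd_add, ofAdd_neg, mul_assoc]

open scoped commutatorElement in
theorem gma_comm {n : ℕ} {x : B} (hx : x ∈ gma B n) (b : B) :
    b + x - b - x ∈ gma B (n + 1) := by
  rw [mem_gma, ← ofAdd_comm_eq]
  have h1 : (⁅Multiplicative.ofAdd x, Multiplicative.ofAdd b⁆ : Multiplicative B)
      ∈ Subgroup.lowerCentralSeries (⊤ : Subgroup (Multiplicative B)) (n + 1) :=
    Subgroup.commutator_mem_commutator (mem_gma.mp hx) (Subgroup.mem_top _)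
  have h2 := (Subgroup.lowerCentralSeries (⊤ : Subgroup (Multiplicative B)) (n + 1)).inv_mem h1
  rwa [commutatorElement_inv] at h2

theorem gma_lam {n : ℕ} {x : B} (hx : x ∈ gma B n) (a : B) : lam a x ∈ gma B n := by
  have hmap : ∀ m, Subgroup.map (AddMonoidHom.toMultiplicative (lamHom a))
      (Subgroup.lowerCentralSeries (⊤ : Subgroup (Multiplicative B)) m) ≤ Subgroup.lowerCentralSeries (⊤ : Subgroup (Multiplicative B)) m := by
    intro m
    induction m with
    | zero => exact le_top
    | succ m ih =>
      show Subgroup.map _ ⁅Subgroup.lowerCentralSeries (⊤ : Subgroup (Multiplicative B)) m, ⊤⁆ ≤ _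
      rw [Subgroup.map_commutator]
      exact Subgroup.commutator_mono ih le_top
  exact hmap n (Subgroup.mem_map.mpr ⟨Multiplicative.ofAdd x, mem_gma.mp hx, rfl⟩)

/-! ### the U filtration -/

def uSet (B : Type*) [SkewBrace B] (j p : ℕ) : AddSubgroup B :=
  AddSubgroup.closure ((gma B (j + 1) : Set B) ∪ (leftPow B p ∩ (gma B j : Set B)))

theorem u_top (x : B) : x ∈ uSet B 0 0 :=
  AddSubgroup.subset_closure (Or.inr ⟨trivial, gma_zero_all x⟩)

theorem u_norm {j p : ℕ} (c : B) {x : B} (hx : x ∈ uSet B j p) : c + x - c ∈ uSet B j p := by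
  refine closure_map_mem (conjHom c) ?_ hx
  rintro s (hs | ⟨hs1, hs2⟩)
  · show c + s - c ∈ uSet B j p
    have h1 : c + s - c - s ∈ gma B (j + 1) := gma_antitone (by omega) (gma_comm hs c)
    have := (uSet B j p).add_mem
      (AddSubgroup.subset_closure (Or.inl h1))
      (AddSubgroup.subset_closure (Or.inl hs))
    rwa [sub_add_cancel] at this
  · show c + s - c ∈ uSet B j p
    have h1 : c + s - c - s ∈ gma B (j + 1) := gma_comm hs2 c
    have := (uSet B j p).add_mem
      (AddSubgroup.subset_closure (Or.inl h1))
      (AddSubgroup.subset_closure (Or.inr ⟨hs1, hs2⟩))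
    rwa [sub_add_cancel] at this

theorem u_ops {j p : ℕ} {x : B} (hx : x ∈ uSet B j p) (b : B) :
    starOp b x ∈ uSet B j (p + 1) ∧ b + x - b - x ∈ uSet B j (p + 1) := by
  refine star_comm_closure (fun c y hy => u_norm c hy) ?_ hx b
  rintro s (hs | ⟨hs1, hs2⟩)
  · intro b'
    constructor
    · rw [star_lam]
      exact (uSet B j (p+1)).sub_mem
        (AddSubgroup.subset_closure (Or.inl (gma_lam hs b')))
        (AddSubgroup.subset_closure (Or.inl hs))
    · exact AddSubgroup.subset_closure (Or.inl (gma_antitone (by omega) (gma_comm hs b')))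
  · intro b'
    constructor
    · have hstar : starOp b' s ∈ leftPow B (p + 1) := lp_star_mem hs1 b'
      have hg : starOp b' s ∈ gma B j := by
        rw [star_lam]
        exact (gma B j).sub_mem (gma_lam hs2 b') hs2
      exact AddSubgroup.subset_closure (Or.inr ⟨hstar, hg⟩)
    · exact AddSubgroup.subset_closure (Or.inl (gma_comm hs2 b'))

theorem u_boundary {L : ℕ} (hL : leftPow B L = {0}) (j : ℕ) :
    uSet B j L ≤ uSet B (j + 1) 0 := by
  apply AddSubgroup.closure_le _ |>.mpr
  rintro s (hs | ⟨hs1, hs2⟩)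
  · exact AddSubgroup.subset_closure (Or.inr ⟨trivial, hs⟩)
  · rw [hL] at hs1
    rcases hs1 with rfl
    exact (uSet B (j+1) 0).zero_mem

theorem u_bot {c : ℕ} (hc : gma B c = ⊥) : ∀ x ∈ uSet B c 0, x = 0 := by
  intro x hx
  have h : uSet B c 0 ≤ ⊥ := by
    apply AddSubgroup.closure_le _ |>.mpr
    rintro s (hs | ⟨-, hs2⟩)
    · have : s ∈ gma B c := gma_antitone (by omega) hs
      rw [hc] at this; exact this
    · rw [hc] at hs2; exact hs2
  simpa using h hx

/-! ### the doubling argument -/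

theorem doubling {A A' : AddSubgroup B} {m : ℕ} (hm : 1 ≤ m)
    (hA : gammaAux B m ⊆ (A : Set B))
    (h1 : ∀ x ∈ A, ∀ b : B, starOp b x ∈ A' ∧ b + x - b - x ∈ A')
    (h2 : ∀ x ∈ gammaAux B m, ∀ y : B, starOp x y ∈ A') :
    gammaAux B (2 * m) ⊆ (A' : Set B) := by
  have h2m : 2 * m = (2 * m - 1) + 1 := by omega
  rw [h2m]
  apply gamma_succ_le
  intro j hj x hx y hy
  by_cases hjm : m ≤ j
  · have hxm : x ∈ gammaAux B m := gamma_mono hjm hx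
    refine ⟨h2 x hxm y, ?_⟩
    have hc := (h1 x (hA hxm) y).2
    have hneg := A'.neg_mem hc
    rwa [neg_comm_eq] at hneg
  · have hym : y ∈ gammaAux B m := gamma_mono (by omega) hy
    exact ⟨(h1 y (hA hym) x).1, (h1 y (hA hym) x).2⟩

/-! ### the master vanishing theorem -/

theorem gamma_vanishes (hnt : Group.IsNilpotent (Multiplicative B))
    (hl : LeftNilpotent B) (hr : RightNilpotent B) :
    ∃ N, gammaAux B N = ({0} : Set B) := by
  obtain ⟨L, hL⟩ := hl
  obtain ⟨R, hR⟩ := hr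
  obtain ⟨c, hc⟩ := (Subgroup.nilpotent_iff_lowerCentralSeries (G := Multiplicative B)).mp hnt
  have hcγ : gma B c = ⊥ := by
    rw [gma, hc]
    exact map_bot _
  have outer : ∀ k, ∃ u, 1 ≤ u ∧ gammaAux B u ⊆ (rpSub B k : Set B) := by
    intro k
    induction k with
    | zero => exact ⟨1, le_refl 1, fun x _ => trivial⟩
    | succ k ih =>
      obtain ⟨u, hu1, hu⟩ := ih
      set W : ℕ → ℕ → AddSubgroup B := fun j p =>
        AddSubgroup.closure ((uSet B j p : Set B) ∪ (rpSub B (k + 1) : Set B)) with hW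
      have hRW : ∀ j p, rpSub B (k+1) ≤ W j p := by
        intro j p z hz
        exact AddSubgroup.subset_closure (Or.inr hz)
      have wnorm : ∀ j p (c' : B), ∀ x ∈ W j p, c' + x - c' ∈ W j p := by
        intro j p c' x hx
        refine closure_map_mem (conjHom c') ?_ hx
        rintro s (hs | hs)
        · exact AddSubgroup.subset_closure (Or.inl (u_norm c' hs))
        · exact hRW j p (rp_norm (k+1) c' s (mem_rpSub.mp hs) |> mem_rpSub.mpr)
      have wops : ∀ j p, ∀ x ∈ W j p, ∀ b : B,
          starOp b x ∈ W j (p+1) ∧ b + x - b - x ∈ W j (p+1) := by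
        intro j p x hx
        refine star_comm_closure (fun c' y hy => wnorm j (p+1) c' y hy) ?_ hx
        rintro s (hs | hs)
        · intro b
          exact ⟨AddSubgroup.subset_closure (Or.inl (u_ops hs b).1),
            AddSubgroup.subset_closure (Or.inl (u_ops hs b).2)⟩
        · intro b
          have hsR : s ∈ rightPow B (k+1) := mem_rpSub.mp hs
          constructor
          · rw [star_lam]
            refine hRW j (p+1) ((rpSub B (k+1)).sub_mem ?_ hs)
            exact mem_rpSub.mpr ((rp_lam_conj (k+1)).1 b s hsR)
          · refine hRW j (p+1) ((rpSub B (k+1)).sub_mem ?_ hs)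
            exact mem_rpSub.mpr (rp_norm (k+1) b s hsR)
      have hstep : ∀ j p, (∃ m, u ≤ m ∧ gammaAux B m ⊆ (W j p : Set B)) →
          ∃ m, u ≤ m ∧ gammaAux B m ⊆ (W j (p+1) : Set B) := by
        rintro j p ⟨m, hm, hsub⟩
        refine ⟨2 * m, by omega, ?_⟩
        apply doubling (by omega) hsub (fun x hx b => wops j p x hx b)
        intro x hx y
        have hxu : x ∈ gammaAux B u := gamma_mono hm hx
        have hxR : x ∈ rightPow B k := by
          have := hu hxu
          rwa [coe_rpSub] at this
        exact hRW j (p+1) (mem_rpSub.mpr (rp_star_mem hxR y))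
      have main : ∀ j p, ∃ m, u ≤ m ∧ gammaAux B m ⊆ (W j p : Set B) := by
        intro j
        have base0 : ∀ j', (∃ m, u ≤ m ∧ gammaAux B m ⊆ (W j' 0 : Set B)) →
            ∀ p, ∃ m, u ≤ m ∧ gammaAux B m ⊆ (W j' p : Set B) := by
          intro j' hbase p
          induction p with
          | zero => exact hbase
          | succ p ihp => exact hstep j' p ihp
        induction j with
        | zero =>
          apply base0
          exact ⟨u, le_refl u, fun x _ => AddSubgroup.subset_closure (Or.inl (u_top x))⟩
        | succ j ihj =>
          apply base0
          obtain ⟨m, hm, hsub⟩ := ihj L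
          refine ⟨m, hm, fun x hx => ?_⟩
          have hx' := hsub hx
          revert hx'
          apply AddSubgroup.closure_le _ |>.mpr
          rintro s (hs | hs)
          · exact AddSubgroup.subset_closure (Or.inl (u_boundary hL j hs))
          · exact AddSubgroup.subset_closure (Or.inr hs)
      obtain ⟨m, hm, hsub⟩ := main c 0
      refine ⟨m, le_trans hu1 hm, fun x hx => ?_⟩
      have hx' := hsub hx
      revert hx'
      apply AddSubgroup.closure_le _ |>.mpr
      rintro s (hs | hs)
      · have : s = 0 := u_bot hcγ s hs
        rw [this]; exact (rpSub B (k+1)).zero_mem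
      · exact hs
  obtain ⟨u, hu1, hu⟩ := outer R
  refine ⟨u, subset_antisymm ?_ ?_⟩
  · intro x hx
    have := hu hx
    rw [coe_rpSub, hR] at this
    exact this
  · intro x hx
    rcases hx with rfl
    exact gamma_zero_mem u

/-! ### the central series property -/

theorem gamma_central (n : ℕ) (x : B) (hx : x ∈ gammaAux B n) (g : B) :
    x * g * x⁻¹ * g⁻¹ ∈ gammaAux B (n + 1) := by
  have hxi : x⁻¹ ∈ gammaAux B n := inv_mem_gamma hx
  have hNn : (gamSub B (n + 1)).Normal := by
    constructor
    intro t ht g0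
    rw [← sub_eq_add_neg]
    exact mem_gamSub.mpr (conj_mem_gamma (mem_gamSub.mp ht) g0)
  set N := gamSub B (n + 1) with hN
  let q : B →+ B ⧸ N := QuotientAddGroup.mk' N
  have hq0 : ∀ z : B, z ∈ gammaAux B (n + 1) → q z = 0 := by
    intro z hz
    exact (QuotientAddGroup.eq_zero_iff z).mpr (mem_gamSub.mpr hz)
  have hmem1 : starOp x g ∈ gammaAux B (n + 1) := star_mem_gamma hx (gamma_zero_all g)
  have hq_lamxg : q (lam x g) = q g := by
    rw [lam_eq_star_add, map_add, hq0 _ hmem1, zero_add]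
  have hmem2 : starOp (x * g) x⁻¹ ∈ gammaAux B (n + 1) := by
    have := star_mem_gamma (gamma_zero_all (x * g)) hxi
    rwa [show 0 + n + 1 = n + 1 by omega] at this
  have hq_p2 : q (lam (x * g) x⁻¹) = q x⁻¹ := by
    rw [lam_eq_star_add, map_add, hq0 _ hmem2, zero_add]
  have hmem3 : starOp x⁻¹ g⁻¹ ∈ gammaAux B (n + 1) := star_mem_gamma hxi (gamma_zero_all g⁻¹)
  have hq_p3 : q (lam (x * g) (lam x⁻¹ g⁻¹)) = -(q g) := by
    rw [lam_eq_star_add x⁻¹ g⁻¹, lam_add', map_add]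
    have hA : lam (x * g) (starOp x⁻¹ g⁻¹) ∈ gammaAux B (n + 1) := by
      rw [lam_eq_star_add]
      have h1 := star_mem_gamma (gamma_zero_all (x * g)) hmem3
      rw [show 0 + (n + 1) + 1 = n + 2 by omega] at h1
      exact gamma_add_mem (gamma_succ_subset (n+1) h1) hmem3
    rw [hq0 _ hA, zero_add, lam_mul' x g g⁻¹, lam_inv_self g, lam_neg', map_neg, hq_lamxg]
  have e : x * g * x⁻¹ * g⁻¹ = (x * g) + (lam (x * g) x⁻¹ + lam (x * g) (lam x⁻¹ g⁻¹)) := by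
    rw [mul_assoc (x * g) x⁻¹ g⁻¹, sb_mul_eq (x * g) (x⁻¹ * g⁻¹), sb_mul_eq x⁻¹ g⁻¹, lam_add']
  have hcomm : q g + q x⁻¹ = q x⁻¹ + q g := by
    have hmemc : g + x⁻¹ - g - x⁻¹ ∈ gammaAux B (n + 1) := by
      have := comm_mem_gamma (gamma_zero_all g) hxi
      rwa [show 0 + n + 1 = n + 1 by omega] at this
    have h0 : q g + q x⁻¹ - q g - q x⁻¹ = 0 := by
      have := hq0 _ hmemc
      rwa [map_sub, map_sub, map_add] at this
    have h1 : q g + q x⁻¹ - q g = q x⁻¹ := sub_eq_zero.mp h0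
    exact sub_eq_iff_eq_add.mp h1
  have hxx : x + x⁻¹ ∈ gammaAux B (n + 1) := by
    have h1 : starOp x x⁻¹ ∈ gammaAux B (n + 1) := star_mem_gamma hx (gamma_zero_all x⁻¹)
    have h2 : x + -(starOp x x⁻¹) - x ∈ gammaAux B (n + 1) :=
      conj_mem_gamma (gamma_neg_mem h1) x
    have he : x + x⁻¹ = x + -(starOp x x⁻¹) - x := by
      conv_lhs => rw [inv_decomp x]
      simp [sub_eq_add_neg, add_assoc]
    rwa [he]
  have hqc : q (x * g * x⁻¹ * g⁻¹) = 0 := by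
    rw [e, map_add, map_add, hq_p2, hq_p3, sb_mul_eq x g, map_add, hq_lamxg]
    rw [add_assoc (q x) (q g) _, ← add_assoc (q g) (q x⁻¹) (-(q g)), hcomm,
      add_assoc (q x⁻¹) (q g) (-(q g)), add_neg_cancel, add_zero, ← map_add q x x⁻¹]
    exact hq0 _ hxx
  have := (QuotientAddGroup.eq_zero_iff (x * g * x⁻¹ * g⁻¹)).mp hqc
  exact mem_gamSub.mp this

/-- Proposition 2.6: a skew brace of nilpotent type (i.e. `(B,+)` is a nilpotent
group) that is left and right nilpotent has nilpotent multiplicative group. -/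
theorem stmt1 {B : Type*} [SkewBrace B]
    (hnt : Group.IsNilpotent (Multiplicative B))
    (hl : LeftNilpotent B) (hr : RightNilpotent B) :
    Group.IsNilpotent B := by
  obtain ⟨N0, hN0⟩ := gamma_vanishes hnt hl hr
  let H : ℕ → Subgroup B := fun n =>
    { carrier := gammaAux B n
      one_mem' := by
        show (1 : B) ∈ gammaAux B n
        rw [sb_one_eq_zero]
        exact gamma_zero_mem n
      mul_mem' := fun ha hb => mul_mem_gamma ha hb
      inv_mem' := fun ha => inv_mem_gamma ha }
  have hH : IsDescendingCentralSeries H := by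
    constructor
    · exact Subgroup.ext fun x => ⟨fun _ => Subgroup.mem_top x, fun _ => gamma_zero_all x⟩
    · intro x n hxn g
      exact gamma_central n x hxn g
  rw [nilpotent_iff_lowerCentralSeries]
  refine ⟨N0, ?_⟩
  rw [eq_bot_iff]
  intro x hx
  have hx2 : x ∈ gammaAux B N0 := descending_central_series_ge_lower H hH N0 hx
  rw [hN0] at hx2
  exact Subgroup.mem_bot.mpr (by rw [sb_one_eq_zero]; exact hx2)

end SkewBrace
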